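/- Let m : ℝ → ℝ be continuous, σ ∈ ℕ, and let z : ℝ × ℝ → ℝ⁴ be a C¹ solution of M ∂ₜz + m(t) K ∂ₓz = ∇S₁(z) + m(t) ∇S₂(z). Let ξ, η : ℝ × ℝ → ℝ⁴ be C¹ solutions of the variational equation M ∂ₜζ + m(t) K ∂ₓζ = Hess S₁(z(t,x)) ζ + m(t) Hess S₂(z(t,x)) ζ, and assume there is a compact set C ⊆ ℝ such that ξ(t,x) = 0 and η(t,x) = 0 whenever x ∉ C and t ∈ [t₀,t₁]. Then the global symplectic form is preserved: ∫_ℝ ⟨ξ(t₁,x), M η(t₁,x)⟩ dx = ∫_ℝ ⟨ξ(t₀,x), M η(t₀,x)⟩ dx (the phase flow preserves the symplectic structure ω̄ = ∫ dp ∧ dq dx). -/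

import Mathlib

open scoped BigOperators Matrix

noncomputable section

/-- Euclidean inner product on `ℝ⁴`. -/
def dot4 (x y : Fin 4 → ℝ) : ℝ := ∑ i, x i * y i

/-- The matrix `M` of the multi-symplectic formulation. -/
def Mmat : Matrix (Fin 4) (Fin 4) ℝ :=
  !![0, -1, 0, 0; 1, 0, 0, 0; 0, 0, 0, 0; 0, 0, 0, 0]

/-- The matrix `K` of the multi-symplectic formulation. -/
def Kmat : Matrix (Fin 4) (Fin 4) ℝ :=
  !![0, 0, 1, 0; 0, 0, 0, 1; -1, 0, 0, 0; 0, -1, 0, 0]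

/-- `S₁(p,q,v,w) = −(p²+q²)^{σ+1}/(2σ+2)`. -/
def S1 (σ : ℕ) (z : Fin 4 → ℝ) : ℝ :=
  -(z 0 ^ 2 + z 1 ^ 2) ^ (σ + 1) / (2 * (σ : ℝ) + 2)

/-- `S₂(p,q,v,w) = −(v²+w²)/2`. -/
def S2 (z : Fin 4 → ℝ) : ℝ := -(z 2 ^ 2 + z 3 ^ 2) / 2

/-- The gradient of `f : ℝ⁴ → ℝ`: the vector of partial derivatives. -/
def grad4 (f : (Fin 4 → ℝ) → ℝ) (z : Fin 4 → ℝ) : Fin 4 → ℝ :=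
  fun i => fderiv ℝ f z (Pi.single i 1)

/-- The Hessian of `f : ℝ⁴ → ℝ` at `z` applied to a vector `ζ`: the derivative of the
gradient at `z` in the direction `ζ`. -/
def hess4 (f : (Fin 4 → ℝ) → ℝ) (z ζ : Fin 4 → ℝ) : Fin 4 → ℝ :=
  fderiv ℝ (grad4 f) z ζ

/-- Partial derivative in the first (time) variable. -/
def pt (z : ℝ × ℝ → Fin 4 → ℝ) (t x : ℝ) : Fin 4 → ℝ := deriv (fun s => z (s, x)) t

/-- Partial derivative in the second (space) variable. -/
def px (z : ℝ × ℝ → Fin 4 → ℝ) (t x : ℝ) : Fin 4 → ℝ := deriv (fun y => z (t, y)) x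


open MeasureTheory

/-! ### Auxiliary lemmas -/

lemma hess4_apply (f : (Fin 4 → ℝ) → ℝ) (hf : ContDiff ℝ 2 f) (zz u : Fin 4 → ℝ) (i : Fin 4) :
    hess4 f zz u i = fderiv ℝ (fderiv ℝ f) zz u (Pi.single i 1) := by
  have hdf : Differentiable ℝ (fderiv ℝ f) :=
    (hf.fderiv_right (m := 1) le_rfl).differentiable one_ne_zero
  have h1 : ∀ i : Fin 4, DifferentiableAt ℝ (fun y => fderiv ℝ f y (Pi.single i 1)) zz := by
    intro i
    exact (ContinuousLinearMap.apply ℝ ℝ (Pi.single i 1 : Fin 4 → ℝ)).differentiable.comp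
      hdf |>.differentiableAt
  have hgrad : fderiv ℝ (grad4 f) zz = ContinuousLinearMap.pi
      (fun i => fderiv ℝ (fun y => fderiv ℝ f y (Pi.single i 1)) zz) :=
    fderiv_pi h1
  have hcomp : fderiv ℝ (fun y => fderiv ℝ f y (Pi.single i 1)) zz
      = (ContinuousLinearMap.apply ℝ ℝ (Pi.single i 1 : Fin 4 → ℝ)).comp
          (fderiv ℝ (fderiv ℝ f) zz) :=
    ((ContinuousLinearMap.apply ℝ ℝ (Pi.single i 1 : Fin 4 → ℝ)).hasFDerivAt.comp zz
      (hdf zz).hasFDerivAt).fderiv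
  simp [hess4, hgrad, hcomp]

lemma hess4_symm (f : (Fin 4 → ℝ) → ℝ) (hf : ContDiff ℝ 2 f) (zz u v : Fin 4 → ℝ) :
    dot4 (hess4 f zz u) v = dot4 u (hess4 f zz v) := by
  have hsymm : ∀ a b : Fin 4 → ℝ,
      fderiv ℝ (fderiv ℝ f) zz a b = fderiv ℝ (fderiv ℝ f) zz b a :=
    fun a b => (hf.contDiffAt.isSymmSndFDerivAt (by norm_num)) a b
  have key : ∀ u v : Fin 4 → ℝ,
      dot4 (hess4 f zz u) v = fderiv ℝ (fderiv ℝ f) zz u v := by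
    intro u v
    have hv : v = ∑ i : Fin 4, v i • (Pi.single i 1 : Fin 4 → ℝ) := by
      ext j; simp [Pi.single_apply]
    calc dot4 (hess4 f zz u) v
        = ∑ i : Fin 4, fderiv ℝ (fderiv ℝ f) zz u (Pi.single i 1) * v i := by
          simp [dot4, hess4_apply f hf]
      _ = fderiv ℝ (fderiv ℝ f) zz u (∑ i : Fin 4, v i • (Pi.single i 1 : Fin 4 → ℝ)) := by
          rw [map_sum]; congr 1; ext i
          rw [(fderiv ℝ (fderiv ℝ f) zz u).map_smul]; simp [mul_comm]
      _ = fderiv ℝ (fderiv ℝ f) zz u v := by rw [← hv]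
  have key2 : dot4 u (hess4 f zz v) = fderiv ℝ (fderiv ℝ f) zz v u := by
    have h : dot4 u (hess4 f zz v) = dot4 (hess4 f zz v) u := by
      simp [dot4, mul_comm]
    rw [h, key]
  rw [key, key2, hsymm]

lemma contDiff_S1 (σ : ℕ) : ContDiff ℝ 2 (S1 σ) := by
  unfold S1
  have h0 : ContDiff ℝ 2 (fun z : Fin 4 → ℝ => z 0) :=
    (ContinuousLinearMap.proj 0 : (Fin 4 → ℝ) →L[ℝ] ℝ).contDiff
  have h1 : ContDiff ℝ 2 (fun z : Fin 4 → ℝ => z 1) :=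
    (ContinuousLinearMap.proj 1 : (Fin 4 → ℝ) →L[ℝ] ℝ).contDiff
  exact (((h0.pow 2).add (h1.pow 2)).pow (σ+1)).neg.div_const _

lemma contDiff_S2 : ContDiff ℝ 2 S2 := by
  unfold S2
  have h2 : ContDiff ℝ 2 (fun z : Fin 4 → ℝ => z 2) :=
    (ContinuousLinearMap.proj 2 : (Fin 4 → ℝ) →L[ℝ] ℝ).contDiff
  have h3 : ContDiff ℝ 2 (fun z : Fin 4 → ℝ => z 3) :=
    (ContinuousLinearMap.proj 3 : (Fin 4 → ℝ) →L[ℝ] ℝ).contDiff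
  exact ((h2.pow 2).add (h3.pow 2)).neg.div_const _

lemma dot4_add_left (u v w : Fin 4 → ℝ) : dot4 (u + v) w = dot4 u w + dot4 v w := by
  simp [dot4, add_mul, Finset.sum_add_distrib]

lemma dot4_smul_left (c : ℝ) (u w : Fin 4 → ℝ) : dot4 (c • u) w = c * dot4 u w := by
  simp [dot4, Finset.mul_sum, mul_assoc]

lemma dot4_add_right (u v w : Fin 4 → ℝ) : dot4 u (v + w) = dot4 u v + dot4 u w := by
  simp [dot4, mul_add, Finset.sum_add_distrib]

lemma dot4_smul_right (c : ℝ) (u w : Fin 4 → ℝ) : dot4 u (c • w) = c * dot4 u w := by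
  simp [dot4, Finset.mul_sum]; congr 1; ext i; ring

lemma alg (c : ℝ) (a b at' bt ax bx Ha Hb : Fin 4 → ℝ)
    (hsym : dot4 Ha b = dot4 a Hb)
    (h1 : Mmat.mulVec at' + c • Kmat.mulVec ax = Ha)
    (h2 : Mmat.mulVec bt + c • Kmat.mulVec bx = Hb) :
    at' 1 * b 0 + a 1 * bt 0 - (at' 0 * b 1 + a 0 * bt 1)
      = c * ((ax 2 * b 0 + ax 3 * b 1 - ax 0 * b 2 - ax 1 * b 3)
           + (a 2 * bx 0 + a 3 * bx 1 - a 0 * bx 2 - a 1 * bx 3)) := by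
  have e10 := congrFun h1 0
  have e11 := congrFun h1 1
  have e12 := congrFun h1 2
  have e13 := congrFun h1 3
  have e20 := congrFun h2 0
  have e21 := congrFun h2 1
  have e22 := congrFun h2 2
  have e23 := congrFun h2 3
  simp [Mmat, Kmat, Matrix.mulVec, dotProduct, Fin.sum_univ_four,
    Matrix.cons_val_zero, Matrix.cons_val_one, Matrix.head_cons] at e10 e11 e12 e13 e20 e21 e22 e23
  simp only [dot4, Fin.sum_univ_four] at hsym
  linear_combination (-b 0) * e10 + (-b 1) * e11 + (-b 2) * e12 + (-b 3) * e13
    + (a 0) * e20 + (a 1) * e21 + (a 2) * e22 + (a 3) * e23 - hsym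

section derivs

variable {w : ℝ × ℝ → Fin 4 → ℝ}

lemma hasDerivAt_pt (hw : ContDiff ℝ 1 w) (t x : ℝ) :
    HasDerivAt (fun s => w (s, x)) (pt w t x) t := by
  have h : HasDerivAt (fun s : ℝ => ((s, x) : ℝ × ℝ)) ((1:ℝ), (0:ℝ)) t :=
    (hasDerivAt_id t).prodMk (hasDerivAt_const t x)
  have h2 := ((hw.differentiable one_ne_zero) (t, x)).hasFDerivAt.comp_hasDerivAt t h
  have hd : pt w t x = fderiv ℝ w (t, x) (1, 0) := h2.deriv
  rw [pt] at hd ⊢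
  rw [hd]; exact h2

lemma hasDerivAt_px (hw : ContDiff ℝ 1 w) (t x : ℝ) :
    HasDerivAt (fun y => w (t, y)) (px w t x) x := by
  have h : HasDerivAt (fun y : ℝ => ((t, y) : ℝ × ℝ)) ((0:ℝ), (1:ℝ)) x :=
    (hasDerivAt_const x t).prodMk (hasDerivAt_id x)
  have h2 := ((hw.differentiable one_ne_zero) (t, x)).hasFDerivAt.comp_hasDerivAt x h
  have hd : px w t x = fderiv ℝ w (t, x) (0, 1) := h2.deriv
  rw [px] at hd ⊢
  rw [hd]; exact h2

lemma px_eq_fderiv (hw : ContDiff ℝ 1 w) (t x : ℝ) :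
    px w t x = fderiv ℝ w (t, x) (0, 1) := by
  have h : HasDerivAt (fun y : ℝ => ((t, y) : ℝ × ℝ)) ((0:ℝ), (1:ℝ)) x :=
    (hasDerivAt_const x t).prodMk (hasDerivAt_id x)
  exact (((hw.differentiable one_ne_zero) (t, x)).hasFDerivAt.comp_hasDerivAt x h).deriv

lemma continuous_px (hw : ContDiff ℝ 1 w) :
    Continuous fun p : ℝ × ℝ => px w p.1 p.2 := by
  have hc : Continuous (fderiv ℝ w) := (hw.fderiv_right (m := 0) (by norm_num)).continuous
  have h : (fun p : ℝ × ℝ => px w p.1 p.2) = fun p => fderiv ℝ w p ((0:ℝ), (1:ℝ)) := by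
    funext p; rw [px_eq_fderiv hw]
  rw [h]
  exact hc.clm_apply continuous_const

lemma hasDerivAt_pt_apply (hw : ContDiff ℝ 1 w) (t x : ℝ) (i : Fin 4) :
    HasDerivAt (fun s => w (s, x) i) (pt w t x i) t :=
  (ContinuousLinearMap.proj i : (Fin 4 → ℝ) →L[ℝ] ℝ).hasFDerivAt.comp_hasDerivAt t
    (hasDerivAt_pt hw t x)

lemma hasDerivAt_px_apply (hw : ContDiff ℝ 1 w) (t x : ℝ) (i : Fin 4) :
    HasDerivAt (fun y => w (t, y) i) (px w t x i) x :=
  (ContinuousLinearMap.proj i : (Fin 4 → ℝ) →L[ℝ] ℝ).hasFDerivAt.comp_hasDerivAt x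
    (hasDerivAt_px hw t x)

end derivs

/-- symplectic density `⟨ξ, Mη⟩` in coordinates -/
def Wfn (ξ η : ℝ × ℝ → Fin 4 → ℝ) (p : ℝ × ℝ) : ℝ := ξ p 1 * η p 0 - ξ p 0 * η p 1

/-- flux density `⟨Kξ, η⟩` in coordinates -/
def Kfn (ξ η : ℝ × ℝ → Fin 4 → ℝ) (p : ℝ × ℝ) : ℝ :=
  ξ p 2 * η p 0 + ξ p 3 * η p 1 - ξ p 0 * η p 2 - ξ p 1 * η p 3

/-- spatial derivative of the flux density -/
def Hfn (ξ η : ℝ × ℝ → Fin 4 → ℝ) (p : ℝ × ℝ) : ℝ :=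
  (px ξ p.1 p.2 2 * η p 0 + px ξ p.1 p.2 3 * η p 1
    - px ξ p.1 p.2 0 * η p 2 - px ξ p.1 p.2 1 * η p 3)
  + (ξ p 2 * px η p.1 p.2 0 + ξ p 3 * px η p.1 p.2 1
    - ξ p 0 * px η p.1 p.2 2 - ξ p 1 * px η p.1 p.2 3)

section fns

variable {ξ η : ℝ × ℝ → Fin 4 → ℝ}

lemma hasDerivAt_Wfn (hξ : ContDiff ℝ 1 ξ) (hη : ContDiff ℝ 1 η) (t x : ℝ) :
    HasDerivAt (fun s => Wfn ξ η (s, x))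
      (pt ξ t x 1 * η (t, x) 0 + ξ (t, x) 1 * pt η t x 0
        - (pt ξ t x 0 * η (t, x) 1 + ξ (t, x) 0 * pt η t x 1)) t := by
  unfold Wfn
  exact ((hasDerivAt_pt_apply hξ t x 1).mul (hasDerivAt_pt_apply hη t x 0)).sub
    ((hasDerivAt_pt_apply hξ t x 0).mul (hasDerivAt_pt_apply hη t x 1))

lemma hasDerivAt_Kfn (hξ : ContDiff ℝ 1 ξ) (hη : ContDiff ℝ 1 η) (t x : ℝ) :
    HasDerivAt (fun y => Kfn ξ η (t, y)) (Hfn ξ η (t, x)) x := by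
  have h := ((((hasDerivAt_px_apply hξ t x 2).mul (hasDerivAt_px_apply hη t x 0)).add
    ((hasDerivAt_px_apply hξ t x 3).mul (hasDerivAt_px_apply hη t x 1))).sub
    ((hasDerivAt_px_apply hξ t x 0).mul (hasDerivAt_px_apply hη t x 2))).sub
    ((hasDerivAt_px_apply hξ t x 1).mul (hasDerivAt_px_apply hη t x 3))
  have hfn : (fun y => Kfn ξ η (t, y)) = fun y => ξ (t, y) 2 * η (t, y) 0
      + ξ (t, y) 3 * η (t, y) 1 - ξ (t, y) 0 * η (t, y) 2 - ξ (t, y) 1 * η (t, y) 3 := rfl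
  rw [hfn]
  refine HasDerivAt.congr_deriv h ?_
  simp [Hfn]; ring

lemma continuous_Wfn (hξ : ContDiff ℝ 1 ξ) (hη : ContDiff ℝ 1 η) :
    Continuous (Wfn ξ η) := by
  unfold Wfn
  have cξ := hξ.continuous
  have cη := hη.continuous
  exact (((continuous_apply 1).comp cξ).mul ((continuous_apply 0).comp cη)).sub
    (((continuous_apply 0).comp cξ).mul ((continuous_apply 1).comp cη))

lemma continuous_Hfn (hξ : ContDiff ℝ 1 ξ) (hη : ContDiff ℝ 1 η) :
    Continuous (Hfn ξ η) := by
  unfold Hfn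
  have cξ := hξ.continuous
  have cη := hη.continuous
  have cpξ := continuous_px hξ
  have cpη := continuous_px hη
  exact ((((((continuous_apply 2).comp cpξ).mul ((continuous_apply 0).comp cη)).add
    (((continuous_apply 3).comp cpξ).mul ((continuous_apply 1).comp cη))).sub
    (((continuous_apply 0).comp cpξ).mul ((continuous_apply 2).comp cη))).sub
    (((continuous_apply 1).comp cpξ).mul ((continuous_apply 3).comp cη))).add
    ((((((continuous_apply 2).comp cξ).mul ((continuous_apply 0).comp cpη)).add
    (((continuous_apply 3).comp cξ).mul ((continuous_apply 1).comp cpη))).sub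
    (((continuous_apply 0).comp cξ).mul ((continuous_apply 2).comp cpη))).sub
    (((continuous_apply 1).comp cξ).mul ((continuous_apply 3).comp cpη)))

end fns

/-- preservation of the global symplectic form
`ω̄ = ∫_ℝ ⟨ξ, Mη⟩ dx` for solutions of the variational equation of the nonlinear
Schrödinger equation with time-dependent dispersion, with spatial compact support. -/
theorem stmt_1 (m : ℝ → ℝ) (hm : Continuous m) (σ : ℕ)
    (z ξ η : ℝ × ℝ → Fin 4 → ℝ)
    (hz : ContDiff ℝ 1 z) (hξ : ContDiff ℝ 1 ξ) (hη : ContDiff ℝ 1 η)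
    (hzeq : ∀ t x : ℝ,
      Mmat.mulVec (pt z t x) + m t • Kmat.mulVec (px z t x)
        = grad4 (S1 σ) (z (t, x)) + m t • grad4 S2 (z (t, x)))
    (hξeq : ∀ t x : ℝ,
      Mmat.mulVec (pt ξ t x) + m t • Kmat.mulVec (px ξ t x)
        = hess4 (S1 σ) (z (t, x)) (ξ (t, x)) + m t • hess4 S2 (z (t, x)) (ξ (t, x)))
    (hηeq : ∀ t x : ℝ,
      Mmat.mulVec (pt η t x) + m t • Kmat.mulVec (px η t x)
        = hess4 (S1 σ) (z (t, x)) (η (t, x)) + m t • hess4 S2 (z (t, x)) (η (t, x)))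
    (t₀ t₁ : ℝ) (ht : t₀ ≤ t₁)
    (C : Set ℝ) (hC : IsCompact C)
    (hsupp : ∀ t x : ℝ, t ∈ Set.Icc t₀ t₁ → x ∉ C → ξ (t, x) = 0 ∧ η (t, x) = 0) :
    ∫ x : ℝ, dot4 (ξ (t₁, x)) (Mmat.mulVec (η (t₁, x)))
      = ∫ x : ℝ, dot4 (ξ (t₀, x)) (Mmat.mulVec (η (t₀, x))) := by
  classical
  -- Step A: time derivative of the symplectic density
  have hW_deriv : ∀ t x : ℝ,
      HasDerivAt (fun s => Wfn ξ η (s, x)) (m t * Hfn ξ η (t, x)) t := by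
    intro t x
    have h := hasDerivAt_Wfn hξ hη t x
    have hsym : dot4 (hess4 (S1 σ) (z (t, x)) (ξ (t, x)) + m t • hess4 S2 (z (t, x)) (ξ (t, x)))
        (η (t, x))
        = dot4 (ξ (t, x))
          (hess4 (S1 σ) (z (t, x)) (η (t, x)) + m t • hess4 S2 (z (t, x)) (η (t, x))) := by
      rw [dot4_add_left, dot4_add_right, dot4_smul_left, dot4_smul_right,
        hess4_symm _ (contDiff_S1 σ), hess4_symm _ contDiff_S2]
    have halg := alg (m t) (ξ (t, x)) (η (t, x)) (pt ξ t x) (pt η t x) (px ξ t x) (px η t x)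
      _ _ hsym (hξeq t x) (hηeq t x)
    have heq : pt ξ t x 1 * η (t, x) 0 + ξ (t, x) 1 * pt η t x 0
        - (pt ξ t x 0 * η (t, x) 1 + ξ (t, x) 0 * pt η t x 1) = m t * Hfn ξ η (t, x) := by
      simp only [Hfn]
      linear_combination halg
    rw [heq] at h
    exact h
  -- geometry of the compact set
  obtain ⟨R, hR⟩ : ∃ R : ℝ, C ⊆ Set.Icc (-R) R := by
    obtain ⟨r, hr⟩ := hC.isBounded.subset_closedBall 0
    exact ⟨r, by simpa [Real.closedBall_eq_Icc, zero_sub, zero_add] using hr⟩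
  set R' : ℝ := |R| + 1 with hR'def
  have hR'pos : (0:ℝ) < R' := by positivity
  have hCR : C ⊆ Set.Ioo (-R') R' := by
    intro y hy
    obtain ⟨hy1, hy2⟩ := hR hy
    have ha := le_abs_self R
    have hb := neg_abs_le R
    exact ⟨by linarith, by linarith⟩
  -- vanishing off the compact set
  have hHzero : ∀ t ∈ Set.Icc t₀ t₁, ∀ x, x ∉ C → Hfn ξ η (t, x) = 0 := by
    intro t htt x hx
    obtain ⟨hξ0, hη0⟩ := hsupp t x htt hx
    simp [Hfn, hξ0, hη0]
  have hWzero : ∀ t ∈ Set.Icc t₀ t₁, ∀ x, x ∉ C → Wfn ξ η (t, x) = 0 := by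
    intro t htt x hx
    obtain ⟨hξ0, hη0⟩ := hsupp t x htt hx
    simp [Wfn, hξ0, hη0]
  have hKzero : ∀ t ∈ Set.Icc t₀ t₁, ∀ x, x ∉ C → Kfn ξ η (t, x) = 0 := by
    intro t htt x hx
    obtain ⟨hξ0, hη0⟩ := hsupp t x htt hx
    simp [Kfn, hξ0, hη0]
  -- Step C: the spatial integral of the flux derivative vanishes
  have hint0 : ∀ t ∈ Set.Icc t₀ t₁, (∫ x : ℝ, m t * Hfn ξ η (t, x)) = 0 := by
    intro t htt
    have hHc : Continuous fun y => Hfn ξ η (t, y) :=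
      (continuous_Hfn hξ hη).comp (continuous_const.prodMk continuous_id)
    have hzero' : ∀ x, x ∉ Set.Ioc (-R') R' → m t * Hfn ξ η (t, x) = 0 := by
      intro x hx
      have hxC : x ∉ C := fun hxC => hx (Set.Ioo_subset_Ioc_self (hCR hxC))
      rw [hHzero t htt x hxC, mul_zero]
    rw [← MeasureTheory.setIntegral_eq_integral_of_forall_compl_eq_zero hzero',
      ← intervalIntegral.integral_of_le (by linarith : -R' ≤ R'),
      intervalIntegral.integral_const_mul]
    have hftc : (∫ y in (-R')..R', Hfn ξ η (t, y))
        = Kfn ξ η (t, R') - Kfn ξ η (t, -R') := by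
      exact intervalIntegral.integral_eq_sub_of_hasDerivAt
        (fun y _ => hasDerivAt_Kfn hξ hη t y) (hHc.intervalIntegrable _ _)
    have h1 : R' ∉ C := fun h => by have := (hCR h).2; linarith
    have h2 : -R' ∉ C := fun h => by have := (hCR h).1; linarith
    rw [hftc, hKzero t htt _ h1, hKzero t htt _ h2]
    simp
  -- Step D: FTC in time
  have hFTC : ∀ x : ℝ, Wfn ξ η (t₁, x) - Wfn ξ η (t₀, x)
      = ∫ t in Set.Ioc t₀ t₁, m t * Hfn ξ η (t, x) := by
    intro x
    rw [← intervalIntegral.integral_of_le ht]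
    have hGc : Continuous fun t => m t * Hfn ξ η (t, x) :=
      hm.mul ((continuous_Hfn hξ hη).comp (continuous_id.prodMk continuous_const))
    exact (intervalIntegral.integral_eq_sub_of_hasDerivAt
      (fun t _ => hW_deriv t x) (hGc.intervalIntegrable _ _)).symm
  -- integrability of the slices
  have hWint : ∀ s, s ∈ Set.Icc t₀ t₁ → Integrable (fun x => Wfn ξ η (s, x)) := by
    intro s hs
    apply Continuous.integrable_of_hasCompactSupport
    · exact (continuous_Wfn hξ hη).comp (continuous_const.prodMk continuous_id)
    · exact HasCompactSupport.intro hC (fun x hx => hWzero s hs x hx)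
  -- Fubini integrability
  have hGG : Integrable (Function.uncurry fun x t => m t * Hfn ξ η (t, x))
      ((volume : Measure ℝ).prod (volume.restrict (Set.Ioc t₀ t₁))) := by
    have hcont : Continuous fun q : ℝ × ℝ => m q.2 * Hfn ξ η (q.2, q.1) :=
      (hm.comp continuous_snd).mul
        ((continuous_Hfn hξ hη).comp (continuous_snd.prodMk continuous_fst))
    have hmeas : (volume : Measure ℝ).prod (volume.restrict (Set.Ioc t₀ t₁))
        = (volume : Measure (ℝ × ℝ)).restrict (Set.univ ×ˢ Set.Ioc t₀ t₁) := by
      rw [← Measure.restrict_univ (μ := (volume : Measure ℝ)), Measure.prod_restrict,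
        Measure.restrict_univ, ← Measure.volume_eq_prod]
    rw [hmeas]
    have h1 : IntegrableOn (fun q : ℝ × ℝ => m q.2 * Hfn ξ η (q.2, q.1))
        (C ×ˢ Set.Ioc t₀ t₁) volume :=
      (ContinuousOn.integrableOn_compact (hC.prod isCompact_Icc) hcont.continuousOn).mono_set
        (Set.prod_mono subset_rfl Set.Ioc_subset_Icc_self)
    have h2 : IntegrableOn (fun q : ℝ × ℝ => m q.2 * Hfn ξ η (q.2, q.1))
        ((Set.univ ×ˢ Set.Ioc t₀ t₁) \ (C ×ˢ Set.Ioc t₀ t₁)) volume := by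
      refine (integrableOn_zero (ε' := ℝ)).congr_fun ?_ ?_
      · intro q hq
        have hq2 : q.2 ∈ Set.Ioc t₀ t₁ := hq.1.2
        have hq1 : q.1 ∉ C := by
          intro hqc
          exact hq.2 ⟨hqc, hq2⟩
        show (0:ℝ) = m q.2 * Hfn ξ η (q.2, q.1)
        rw [hHzero q.2 (Set.Ioc_subset_Icc_self hq2) q.1 hq1, mul_zero]
      · exact (MeasurableSet.univ.prod measurableSet_Ioc).diff
          (hC.measurableSet.prod measurableSet_Ioc)
    have hsub : Set.univ ×ˢ Set.Ioc t₀ t₁ ⊆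
        (C ×ˢ Set.Ioc t₀ t₁) ∪ ((Set.univ ×ˢ Set.Ioc t₀ t₁) \ (C ×ˢ Set.Ioc t₀ t₁)) := by
      intro p hp
      by_cases hpc : p ∈ C ×ˢ Set.Ioc t₀ t₁
      · exact Or.inl hpc
      · exact Or.inr ⟨hp, hpc⟩
    exact (h1.union h2).mono_set hsub
  -- assemble
  have key : (∫ x : ℝ, Wfn ξ η (t₁, x)) = ∫ x : ℝ, Wfn ξ η (t₀, x) := by
    have hsub0 : (∫ x : ℝ, (Wfn ξ η (t₁, x) - Wfn ξ η (t₀, x))) = 0 := by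
      calc (∫ x : ℝ, (Wfn ξ η (t₁, x) - Wfn ξ η (t₀, x)))
          = ∫ x : ℝ, ∫ t in Set.Ioc t₀ t₁, m t * Hfn ξ η (t, x) :=
            integral_congr_ae (Filter.Eventually.of_forall fun x => hFTC x)
        _ = ∫ t in Set.Ioc t₀ t₁, ∫ x : ℝ, m t * Hfn ξ η (t, x) :=
            integral_integral_swap hGG
        _ = 0 := setIntegral_eq_zero_of_forall_eq_zero
            (fun t htIoc => hint0 t (Set.Ioc_subset_Icc_self htIoc))
    have hs := integral_sub (hWint t₁ ⟨ht, le_rfl⟩) (hWint t₀ ⟨le_rfl, ht⟩)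
    rw [hsub0] at hs
    linarith [hs.symm]
  have hgoal : ∀ p : ℝ × ℝ, dot4 (ξ p) (Mmat.mulVec (η p)) = Wfn ξ η p := by
    intro p
    simp [dot4, Wfn, Mmat, Matrix.mulVec, dotProduct, Fin.sum_univ_four,
      Matrix.vecHead, Matrix.vecTail]
    ring
  simp only [hgoal]
  exact key

end
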